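/- Tail-ratio bound for grand canonical particle number: let μ_α on ℕ^Λ be the product measure with marginals μ_α[η_x = k] = α^k/(Z(α)·c(k)!), and p(n) := μ_α[∑_{x∈Λ} η_x = n]. If A₀⁻¹ k ≤ c(k) ≤ A₀ k for all k ≥ 1, then (α|Λ|)/(A₀(n+1)) ≤ p(n+1)/p(n) ≤ (A₀ α|Λ|)/(n+1) for all n ∈ ℕ. -/

import Mathlib

open Finset

/-- `cfact c n = c(1)⋯c(n)`, with `cfact c 0 = 1`. -/
noncomputable def cfact (c : ℕ → ℝ) (n : ℕ) : ℝ := ∏ k ∈ Finset.range n, c (k + 1)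

/-- The grand canonical normalization `Z(α) = ∑_k α^k/c(k)!`. -/
noncomputable def grandZ (c : ℕ → ℝ) (α : ℝ) : ℝ := ∑' k : ℕ, α ^ k / cfact c k

/-- `pGC c α Λ n = μ_α[η̄_Λ = n]`, the probability under the grand canonical product measure
with marginals `μ_α[η_x = k] = α^k/(Z(α) c(k)!)` that the total particle number equals `n`. -/
noncomputable def pGC (c : ℕ → ℝ) (α : ℝ) (Λ : Type*) [Fintype Λ] (n : ℕ) : ℝ :=
  ∑' η : Λ → ℕ,
    if (∑ x, η x) = n then ∏ x, α ^ η x / (grandZ c α * cfact c (η x)) else 0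

lemma cfact_succ (c : ℕ → ℝ) (n : ℕ) : cfact c (n + 1) = cfact c n * c (n + 1) := by
  simp [cfact, Finset.prod_range_succ]
lemma cfact_pos (c : ℕ → ℝ) (hcpos : ∀ k, 0 < k → 0 < c k) (n : ℕ) : 0 < cfact c n :=
  Finset.prod_pos fun k _ => hcpos _ k.succ_pos

noncomputable def sConf (Λ : Type*) [Fintype Λ] [DecidableEq Λ] (n : ℕ) : Finset (Λ → ℕ) :=
  (Fintype.piFinset fun _ : Λ => Finset.range (n + 1)).filter fun η => ∑ x, η x = n

lemma mem_sConf {Λ : Type*} [Fintype Λ] [DecidableEq Λ] {n : ℕ} {η : Λ → ℕ} :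
    η ∈ sConf Λ n ↔ ∑ x, η x = n := by
  classical
  constructor
  · intro h; exact (Finset.mem_filter.mp h).2
  · intro h
    refine Finset.mem_filter.mpr ⟨Fintype.mem_piFinset.mpr fun x => ?_, h⟩
    exact Finset.mem_range.mpr (Nat.lt_succ_of_le (h ▸ Finset.single_le_sum (fun i _ => Nat.zero_le _) (Finset.mem_univ x)))

noncomputable def Wsum (c : ℕ → ℝ) (Λ : Type*) [Fintype Λ] [DecidableEq Λ] (n : ℕ) : ℝ :=
  ∑ η ∈ sConf Λ n, ∏ x, (cfact c (η x))⁻¹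

lemma Wsum_pos {Λ : Type*} [Fintype Λ] [DecidableEq Λ] [Nonempty Λ] (c : ℕ → ℝ)
    (hcpos : ∀ k, 0 < k → 0 < c k) (n : ℕ) : 0 < Wsum c Λ n := by
  classical
  obtain ⟨x₀⟩ := ‹Nonempty Λ›
  have hmem : (fun x => if x = x₀ then n else 0) ∈ sConf Λ n := by
    rw [mem_sConf]; simp
  refine Finset.sum_pos' (fun η _ => Finset.prod_nonneg fun x _ => (inv_pos.mpr (cfact_pos c hcpos _)).le) ⟨_, hmem, ?_⟩
  exact Finset.prod_pos fun x _ => inv_pos.mpr (cfact_pos c hcpos _)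

section key
variable (c : ℕ → ℝ) {Λ : Type*} [Fintype Λ] [DecidableEq Λ]

lemma Tx_eq (hcpos : ∀ k, 0 < k → 0 < c k) (n : ℕ) (x : Λ) :
    ∑ η ∈ sConf Λ (n + 1), (η x : ℝ) * ∏ y, (cfact c (η y))⁻¹
      = ∑ ζ ∈ sConf Λ n, ((ζ x + 1 : ℕ) : ℝ) / c (ζ x + 1) * ∏ y, (cfact c (ζ y))⁻¹ := by
  classical
  rw [← Finset.sum_filter_of_ne (p := fun η => η x ≠ 0)
      (by intro η _ h hx; simp [hx] at h)]
  refine Finset.sum_nbij' (i := fun η => Function.update η x (η x - 1))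
    (j := fun ζ => Function.update ζ x (ζ x + 1)) ?_ ?_ ?_ ?_ ?_
  · intro η hη
    obtain ⟨hη, hx⟩ := Finset.mem_filter.mp hη
    rw [mem_sConf] at hη ⊢
    rw [Finset.sum_update_of_mem (Finset.mem_univ x)]
    rw [← Finset.add_sum_erase _ _ (Finset.mem_univ x), Finset.erase_eq] at hη
    omega
  · intro ζ hζ
    rw [mem_sConf] at hζ
    refine Finset.mem_filter.mpr ⟨mem_sConf.mpr ?_, by simp⟩
    rw [Finset.sum_update_of_mem (Finset.mem_univ x)]
    rw [← Finset.add_sum_erase _ _ (Finset.mem_univ x), Finset.erase_eq] at hζ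
    omega
  · intro η hη
    obtain ⟨-, hx⟩ := Finset.mem_filter.mp hη
    simp only [Function.update_idem, Function.update_self]
    rw [Nat.sub_add_cancel (Nat.one_le_iff_ne_zero.mpr hx), Function.update_eq_self]
  · intro ζ _
    simp only [Function.update_idem, Function.update_self]
    rw [Nat.add_sub_cancel, Function.update_eq_self]
  · intro η hη
    obtain ⟨-, hx⟩ := Finset.mem_filter.mp hη
    have h1 : 1 ≤ η x := Nat.one_le_iff_ne_zero.mpr hx
    have hux : Function.update η x (η x - 1) x + 1 = η x := by simp; omega
    rw [hux]
    -- split product at x on both sides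
    rw [← Finset.mul_prod_erase _ _ (Finset.mem_univ x),
        ← Finset.mul_prod_erase _ _ (Finset.mem_univ x)]
    have hprod : ∏ y ∈ Finset.univ.erase x, (cfact c (Function.update η x (η x - 1) y))⁻¹
        = ∏ y ∈ Finset.univ.erase x, (cfact c (η y))⁻¹ := by
      refine Finset.prod_congr rfl fun y hy => ?_
      rw [Function.update_of_ne (Finset.ne_of_mem_erase hy)]
    rw [hprod]
    beta_reduce
    rw [Function.update_self]
    have hcf : cfact c (η x) = cfact c (η x - 1) * c (η x) := by
      obtain ⟨m, hm⟩ : ∃ m, η x = m + 1 := ⟨η x - 1, by omega⟩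
      rw [hm, cfact_succ, Nat.add_sub_cancel]
    rw [hcf]
    have hc : c (η x) ≠ 0 := (hcpos _ h1).ne'
    have hcf1 : cfact c (η x - 1) ≠ 0 := (cfact_pos c hcpos _).ne'
    field_simp

end key

section rest
variable (c : ℕ → ℝ) {Λ : Type*} [Fintype Λ] [DecidableEq Λ]

lemma key_ineq (hcpos : ∀ k, 0 < k → 0 < c k) (A₀ : ℝ) (hA₀ : 1 ≤ A₀)
    (hgrow : ∀ k : ℕ, 1 ≤ k → A₀⁻¹ * k ≤ c k ∧ c k ≤ A₀ * k) (n : ℕ) :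
    A₀⁻¹ * (Fintype.card Λ) * Wsum c Λ n ≤ ((n : ℝ) + 1) * Wsum c Λ (n + 1) ∧
    ((n : ℝ) + 1) * Wsum c Λ (n + 1) ≤ A₀ * (Fintype.card Λ) * Wsum c Λ n := by
  have hA0pos : (0:ℝ) < A₀ := lt_of_lt_of_le one_pos hA₀
  have hswap : ((n:ℝ) + 1) * Wsum c Λ (n + 1)
      = ∑ x : Λ, ∑ ζ ∈ sConf Λ n, ((ζ x + 1 : ℕ) : ℝ) / c (ζ x + 1) * ∏ y, (cfact c (ζ y))⁻¹ := by
    rw [Wsum, Finset.mul_sum]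
    have : ∀ η ∈ sConf Λ (n+1), ((n:ℝ)+1) * ∏ x, (cfact c (η x))⁻¹
        = ∑ x : Λ, (η x : ℝ) * ∏ y, (cfact c (η y))⁻¹ := by
      intro η hη
      rw [← Finset.sum_mul]
      congr 1
      rw [← Nat.cast_sum, mem_sConf.mp hη]
      push_cast; ring
    rw [Finset.sum_congr rfl this, Finset.sum_comm]
    exact Finset.sum_congr rfl fun x _ => Tx_eq c hcpos n x
  have hratio : ∀ k : ℕ, A₀⁻¹ ≤ ((k + 1 : ℕ) : ℝ) / c (k + 1) ∧ ((k + 1 : ℕ) : ℝ) / c (k + 1) ≤ A₀ := by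
    intro k
    obtain ⟨h1, h2⟩ := hgrow (k+1) (Nat.le_add_left 1 k)
    have hck : 0 < c (k+1) := hcpos _ k.succ_pos
    have hk1 : (0:ℝ) < ((k+1:ℕ):ℝ) := by positivity
    constructor
    · rw [le_div_iff₀ hck]
      nlinarith [mul_inv_cancel₀ hA0pos.ne']
    · rw [div_le_iff₀ hck]
      nlinarith [mul_inv_cancel₀ hA0pos.ne']
  have hprodnn : ∀ ζ : Λ → ℕ, (0:ℝ) ≤ ∏ y, (cfact c (ζ y))⁻¹ := fun ζ =>
    Finset.prod_nonneg fun y _ => (inv_pos.mpr (cfact_pos c hcpos _)).le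
  constructor
  · rw [hswap, show A₀⁻¹ * (Fintype.card Λ) * Wsum c Λ n = ∑ _x : Λ, A₀⁻¹ * Wsum c Λ n by
      rw [Finset.sum_const, Finset.card_univ, nsmul_eq_mul]; ring]
    refine Finset.sum_le_sum fun x _ => ?_
    rw [Wsum, Finset.mul_sum]
    exact Finset.sum_le_sum fun ζ _ => mul_le_mul_of_nonneg_right (hratio (ζ x)).1 (hprodnn ζ)
  · rw [hswap, show A₀ * (Fintype.card Λ) * Wsum c Λ n = ∑ _x : Λ, A₀ * Wsum c Λ n by
      rw [Finset.sum_const, Finset.card_univ, nsmul_eq_mul]; ring]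
    refine Finset.sum_le_sum fun x _ => ?_
    rw [Wsum, Finset.mul_sum]
    exact Finset.sum_le_sum fun ζ _ => mul_le_mul_of_nonneg_right (hratio (ζ x)).2 (hprodnn ζ)

end rest

section form
variable (c : ℕ → ℝ) {Λ : Type*} [Fintype Λ] [DecidableEq Λ]

lemma grandZ_pos (hcpos : ∀ k, 0 < k → 0 < c k) (α : ℝ) (hα : 0 < α)
    (hsum : Summable fun k : ℕ => α ^ k / cfact c k) : 0 < grandZ c α := by
  have h0 : α ^ 0 / cfact c 0 ≤ grandZ c α :=
    Summable.le_tsum hsum 0 fun i _ => by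
      have := cfact_pos c hcpos i
      positivity
  have h1 : α ^ 0 / cfact c 0 = 1 := by simp [cfact]
  rw [h1] at h0
  linarith

lemma pGC_eq (hcpos : ∀ k, 0 < k → 0 < c k) (α : ℝ) (n : ℕ) :
    pGC c α Λ n = α ^ n / (grandZ c α) ^ (Fintype.card Λ) * Wsum c Λ n := by
  classical
  rw [pGC, tsum_eq_sum (s := sConf Λ n) (fun η hη => by
    rw [if_neg (fun h => hη (mem_sConf.mpr h))])]
  rw [Wsum, Finset.mul_sum]
  refine Finset.sum_congr rfl fun η hη => ?_
  rw [if_pos (mem_sConf.mp hη)]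
  rw [Finset.prod_div_distrib, Finset.prod_mul_distrib, Finset.prod_const,
      Finset.prod_pow_eq_pow_sum, mem_sConf.mp hη, Finset.card_univ,
      Finset.prod_inv_distrib, div_mul_eq_div_div, ← div_eq_mul_inv]

end form

/-- Tail-ratio bound for the grand canonical particle number. -/
theorem grand_canonical_tail_ratio {Λ : Type*} [Fintype Λ] [Nonempty Λ]
    (c : ℕ → ℝ) (hc0 : c 0 = 0) (hcpos : ∀ k, 0 < k → 0 < c k)
    (A₀ : ℝ) (hA₀ : 1 ≤ A₀)
    (hgrow : ∀ k : ℕ, 1 ≤ k → A₀⁻¹ * k ≤ c k ∧ c k ≤ A₀ * k)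
    (α : ℝ) (hα : 0 < α) (hsum : Summable fun k : ℕ => α ^ k / cfact c k) :
    ∀ n : ℕ,
      α * (Fintype.card Λ) / (A₀ * (n + 1)) ≤ pGC c α Λ (n + 1) / pGC c α Λ n ∧
      pGC c α Λ (n + 1) / pGC c α Λ n ≤ A₀ * α * (Fintype.card Λ) / (n + 1) := by
  classical
  intro n
  have hA0pos : (0:ℝ) < A₀ := lt_of_lt_of_le one_pos hA₀
  have hAinv : A₀ * A₀⁻¹ = 1 := mul_inv_cancel₀ hA0pos.ne'
  have hZ : 0 < grandZ c α := grandZ_pos c hcpos α hα hsum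
  have hW0 : 0 < Wsum c Λ n := Wsum_pos c hcpos n
  have hW1 : 0 < Wsum c Λ (n + 1) := Wsum_pos c hcpos (n + 1)
  have hN : (0:ℝ) < (Fintype.card Λ : ℝ) := by exact_mod_cast Fintype.card_pos
  have hn1 : (0:ℝ) < (n : ℝ) + 1 := by positivity
  have hp : pGC c α Λ (n + 1) / pGC c α Λ n = α * Wsum c Λ (n + 1) / Wsum c Λ n := by
    rw [pGC_eq c hcpos α (n + 1), pGC_eq c hcpos α n]
    have hZN : (grandZ c α) ^ (Fintype.card Λ) ≠ 0 := by positivity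
    field_simp
    ring
  obtain ⟨h1, h2⟩ := key_ineq c (Λ := Λ) hcpos A₀ hA₀ hgrow n
  rw [hp]
  constructor
  · rw [div_le_div_iff₀ (by positivity) hW0]
    have key := mul_le_mul_of_nonneg_left h1 (mul_pos hα hA0pos).le
    calc α * (Fintype.card Λ : ℝ) * Wsum c Λ n
        = α * A₀ * (A₀⁻¹ * (Fintype.card Λ : ℝ) * Wsum c Λ n) := by
          rw [show α * A₀ * (A₀⁻¹ * (Fintype.card Λ : ℝ) * Wsum c Λ n)
              = α * (A₀ * A₀⁻¹) * ((Fintype.card Λ : ℝ) * Wsum c Λ n) from by ring, hAinv]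
          ring
      _ ≤ α * A₀ * (((n : ℝ) + 1) * Wsum c Λ (n + 1)) := key
      _ = α * Wsum c Λ (n + 1) * (A₀ * ((n : ℝ) + 1)) := by ring
  · rw [div_le_div_iff₀ hW0 hn1]
    have key := mul_le_mul_of_nonneg_left h2 hα.le
    calc α * Wsum c Λ (n + 1) * ((n : ℝ) + 1)
        = α * (((n : ℝ) + 1) * Wsum c Λ (n + 1)) := by ring
      _ ≤ α * (A₀ * (Fintype.card Λ : ℝ) * Wsum c Λ n) := key
      _ = A₀ * α * (Fintype.card Λ : ℝ) * Wsum c Λ n := by ring
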